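/- Let (X_n) be a uniformly bounded sequence of real random variables with X_n → 0 almost surely, and let (F_n) be a filtration. Then E[X_n | F_n] → 0 almost surely. -/

import Mathlib

open MeasureTheory Filter

/-- Chung, Theorem 9.4.8: if `X n → 0` a.s. and the `X n` are uniformly bounded,
then `E[X n | F n] → 0` a.s. for any filtration `(F n)`. -/
theorem condexp_tendsto_zero_of_tendsto_zero
    {Ω : Type*} {m : MeasurableSpace Ω} (μ : Measure Ω) [IsProbabilityMeasure μ]
    (F : Filtration ℕ m) (X : ℕ → Ω → ℝ) (C : ℝ)
    (hbd : ∀ n ω, |X n ω| ≤ C)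
    (hmeas : ∀ n, Measurable (X n))
    (hconv : ∀ᵐ ω ∂μ, Tendsto (fun n => X n ω) atTop (nhds 0)) :
    ∀ᵐ ω ∂μ, Tendsto (fun n => (μ[X n | F n]) ω) atTop (nhds 0) := by
  -- The running supremum `Y m ω = sup_{n ≥ m} |X n ω|`
  set Y : ℕ → Ω → ℝ := fun m ω => ⨆ k : ℕ, |X (m + k) ω| with hYdef
  have hbdda : ∀ m ω, BddAbove (Set.range fun k => |X (m + k) ω|) := by
    intro m ω
    refine ⟨C, ?_⟩
    rintro _ ⟨k, rfl⟩
    exact hbd _ _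
  have hYle : ∀ m n (ω : Ω), m ≤ n → |X n ω| ≤ Y m ω := by
    intro m n ω h
    have := le_ciSup (hbdda m ω) (n - m)
    rwa [Nat.add_sub_cancel' h] at this
  have hYnonneg : ∀ m ω, 0 ≤ Y m ω := fun m ω =>
    (abs_nonneg _).trans (hYle m m ω le_rfl)
  have hYC : ∀ m ω, Y m ω ≤ C := fun m ω => ciSup_le fun k => hbd _ _
  have hYanti : ∀ ω : Ω, Antitone fun m => Y m ω := by
    intro ω
    refine antitone_nat_of_succ_le fun p => ciSup_le fun k => ?_
    have := le_ciSup (hbdda p ω) (k + 1)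
    simpa [Nat.add_assoc, Nat.add_comm 1 k] using this
  have hYmeas : ∀ p, Measurable (Y p) := fun p =>
    Measurable.iSup fun k => (hmeas _).abs
  have hXint : ∀ n, Integrable (X n) μ := fun n =>
    (integrable_const C).mono' (hmeas n).aestronglyMeasurable
      (Filter.Eventually.of_forall fun ω => by simpa using hbd n ω)
  have hYint : ∀ p, Integrable (Y p) μ := fun p =>
    (integrable_const C).mono' (hYmeas p).aestronglyMeasurable
      (Filter.Eventually.of_forall fun ω => by
        rw [Real.norm_eq_abs, abs_of_nonneg (hYnonneg p ω)]; exact hYC p ω)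
  -- `Y m → 0` a.s.
  have hYtend : ∀ᵐ ω ∂μ, Tendsto (fun p => Y p ω) atTop (nhds 0) := by
    filter_upwards [hconv] with ω hω
    rw [Metric.tendsto_atTop] at hω ⊢
    intro ε hε
    obtain ⟨N, hN⟩ := hω (ε / 2) (half_pos hε)
    refine ⟨N, fun p hp => ?_⟩
    rw [Real.dist_eq, sub_zero, abs_of_nonneg (hYnonneg p ω)]
    have h1 : Y p ω ≤ ε / 2 := by
      refine ciSup_le fun k => ?_
      have := hN (p + k) (le_trans hp (Nat.le_add_right p k))
      rw [Real.dist_eq, sub_zero] at this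
      exact this.le
    exact lt_of_le_of_lt h1 (half_lt_self hε)
  -- the limit σ-algebra
  have hle : (⨆ n, F n) ≤ m := iSup_le fun n => F.le n
  set Z : ℕ → Ω → ℝ := fun p => μ[Y p | ⨆ n, F n] with hZdef
  -- Z is a.e. antitone and nonneg and bounded by C
  have hZanti : ∀ᵐ ω ∂μ, ∀ p, Z (p + 1) ω ≤ Z p ω := by
    rw [ae_all_iff]
    intro p
    exact condExp_mono (hYint (p + 1)) (hYint p)
      (Filter.Eventually.of_forall fun ω => hYanti ω (Nat.le_succ p))
  have hZnonneg : ∀ᵐ ω ∂μ, ∀ p, 0 ≤ Z p ω := by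
    rw [ae_all_iff]
    intro p
    exact condExp_nonneg (Filter.Eventually.of_forall (hYnonneg p))
  have hZC : ∀ᵐ ω ∂μ, ∀ p, Z p ω ≤ C := by
    rw [ae_all_iff]
    intro p
    have := condExp_mono (μ := μ) (m := ⨆ n, F n) (hYint p) (integrable_const C)
      (Filter.Eventually.of_forall fun ω => hYC p ω)
    filter_upwards [this] with ω h1
    simpa [condExp_const hle C] using h1
  -- ∫ Z p = ∫ Y p → 0
  have hIntTend : Tendsto (fun p => ∫ ω, Y p ω ∂μ) atTop (nhds 0) := by
    have := tendsto_integral_of_dominated_convergence (fun _ => C)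
      (fun p => (hYmeas p).aestronglyMeasurable) (integrable_const C)
      (fun p => Filter.Eventually.of_forall fun ω => by
        rw [Real.norm_eq_abs, abs_of_nonneg (hYnonneg p ω)]; exact hYC p ω)
      hYtend
    simpa using this
  -- the a.e. infimum of Z is zero
  set L : Ω → ℝ := fun ω => ⨅ p, Z p ω with hLdef
  have hZmeas : ∀ p, Measurable (Z p) :=
    fun p => (stronglyMeasurable_condExp.mono hle).measurable
  have hLmeas : Measurable L := Measurable.iInf hZmeas
  have hLboundae : ∀ᵐ ω ∂μ, ‖L ω‖ ≤ C := by
    filter_upwards [hZnonneg, hZC] with ω h0 hC'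
    have hbdd : BddBelow (Set.range fun p => Z p ω) := ⟨0, by rintro _ ⟨p, rfl⟩; exact h0 p⟩
    have hl0 : 0 ≤ L ω := le_ciInf h0
    have hlC : L ω ≤ C := le_trans (ciInf_le hbdd 0) (hC' 0)
    rw [Real.norm_eq_abs, abs_of_nonneg hl0]; exact hlC
  have hLint : Integrable L μ :=
    (integrable_const C).mono' hLmeas.aestronglyMeasurable hLboundae
  have hLnonneg : ∀ᵐ ω ∂μ, 0 ≤ L ω := by
    filter_upwards [hZnonneg] with ω h0
    exact le_ciInf h0
  have hLleZ : ∀ p, ∀ᵐ ω ∂μ, L ω ≤ Z p ω := by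
    intro p
    filter_upwards [hZnonneg] with ω h0
    exact ciInf_le ⟨0, by rintro _ ⟨q, rfl⟩; exact h0 q⟩ p
  have hIntL : ∫ ω, L ω ∂μ = 0 := by
    have hmono : ∀ p, ∫ ω, L ω ∂μ ≤ ∫ ω, Y p ω ∂μ := by
      intro p
      rw [← integral_condExp hle (f := Y p)]
      exact integral_mono_ae hLint integrable_condExp (hLleZ p)
    have h1 : ∫ ω, L ω ∂μ ≤ 0 :=
      le_of_tendsto_of_tendsto' tendsto_const_nhds hIntTend fun p => hmono p
    have h2 : 0 ≤ ∫ ω, L ω ∂μ := integral_nonneg_of_ae hLnonneg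
    linarith
  have hLzero : ∀ᵐ ω ∂μ, L ω = 0 := by
    have := (integral_eq_zero_iff_of_nonneg_ae hLnonneg hLint).1 hIntL
    filter_upwards [this] with ω hω
    simpa using hω
  -- Z p ω → 0 a.e.
  have hZtend : ∀ᵐ ω ∂μ, Tendsto (fun p => Z p ω) atTop (nhds 0) := by
    filter_upwards [hZanti, hZnonneg, hLzero] with ω hanti h0 hl
    have hbdd : BddBelow (Set.range fun p => Z p ω) := ⟨0, by rintro _ ⟨p, rfl⟩; exact h0 p⟩
    have : Tendsto (fun p => Z p ω) atTop (nhds (⨅ p, Z p ω)) :=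
      tendsto_atTop_ciInf (antitone_nat_of_succ_le hanti) hbdd
    rwa [show (⨅ p, Z p ω) = 0 from hl] at this
  -- Lévy upward: E[Y p | F n] → Z p a.e. for each p
  have hLevy : ∀ᵐ ω ∂μ, ∀ p, Tendsto (fun n => (μ[Y p | F n]) ω) atTop (nhds (Z p ω)) := by
    rw [ae_all_iff]
    intro p
    exact tendsto_ae_condExp (ℱ := F) (Y p)
  -- |E[X n | F n]| ≤ E[Y p | F n] a.e., for n ≥ p
  have hdom : ∀ᵐ ω ∂μ, ∀ p n, p ≤ n → |(μ[X n | F n]) ω| ≤ (μ[Y p | F n]) ω := by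
    rw [ae_all_iff]
    intro p
    rw [ae_all_iff]
    intro n
    by_cases hpn : p ≤ n
    · have hub : ∀ᵐ ω ∂μ, (μ[X n | F n]) ω ≤ (μ[Y p | F n]) ω :=
        condExp_mono (hXint n) (hYint p)
          (Filter.Eventually.of_forall fun ω => le_trans (le_abs_self _) (hYle p n ω hpn))
      have hlb0 : ∀ᵐ ω ∂μ, (μ[-X n | F n]) ω ≤ (μ[Y p | F n]) ω :=
        condExp_mono (hXint n).neg (hYint p)
          (Filter.Eventually.of_forall fun ω => by
            have := le_trans (neg_abs_le _) (neg_le_neg (hYle p n ω hpn))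
            simpa using le_trans (neg_le_abs _) (hYle p n ω hpn))
      have hneg := condExp_neg (μ := μ) (m := F n) (X n)
      filter_upwards [hub, hlb0, hneg] with ω h1 h2 h3
      intro hpn'
      rw [abs_le]
      constructor
      · have : -(μ[X n | F n]) ω ≤ (μ[Y p | F n]) ω := by
          rw [← show (μ[-X n | F n]) ω = -(μ[X n | F n]) ω from h3]
          exact h2
        linarith
      · exact h1
    · filter_upwards with ω h
      exact absurd h hpn
  -- Final assembly
  filter_upwards [hZtend, hLevy, hdom] with ω hZt hLv hd
  rw [Metric.tendsto_atTop]
  intro ε hε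
  -- choose p with Z p ω < ε / 2
  obtain ⟨p, hp⟩ : ∃ p, Z p ω < ε / 2 := by
    have := (Metric.tendsto_atTop.1 hZt) (ε / 2) (half_pos hε)
    obtain ⟨p, hp⟩ := this
    exact ⟨p, lt_of_abs_lt (by simpa [Real.dist_eq] using hp p le_rfl)⟩
  -- choose N with E[Y p | F n] ω < Z p ω + ε/2 for n ≥ N
  obtain ⟨N, hN⟩ := (Metric.tendsto_atTop.1 (hLv p)) (ε / 2) (half_pos hε)
  refine ⟨max p N, fun n hn => ?_⟩
  have hn1 : p ≤ n := le_trans (le_max_left _ _) hn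
  have hn2 : N ≤ n := le_trans (le_max_right _ _) hn
  rw [Real.dist_eq, sub_zero]
  have h1 : |(μ[X n | F n]) ω| ≤ (μ[Y p | F n]) ω := hd p n hn1
  have h2 : (μ[Y p | F n]) ω < Z p ω + ε / 2 := by
    have := hN n hn2
    rw [Real.dist_eq] at this
    have := lt_of_abs_lt this
    linarith
  calc |(μ[X n | F n]) ω| ≤ (μ[Y p | F n]) ω := h1
    _ < Z p ω + ε / 2 := h2
    _ < ε / 2 + ε / 2 := by linarith
    _ = ε := by ring
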